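/- Let c, s, L, E, I, A, A*, G > 0 be reals, let a, u, v be reals with 1 < a < 16, 1 < u < 4, 1 < v < 4, and let z ∈ ℝ. Then as P → ∞ the vertical displacements V(P,z) converge to 20·c²·L³/(3·E·I·(16 − a)) − (c²·L³/(E·I))·Ψ_{a/16}(z) + 2·s²·L/(E·A·(4 − u)) + 2·c²·L/(G·A*·(4 − v)), where Ψ_{a/16}(z) = Σ_{k=0}^∞ (a/16)^k σ(2^k z) is the Takagi-class function; that is, the vertical displacements of the end nodes of the infinite binary tree are given by a Takagi curve. -/

import Mathlib

open Filter

/-- Distance from a real number to the nearest integer: σ(x) = min_{k∈ℤ} |x − k|. -/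
noncomputable def distNearInt (x : ℝ) : ℝ := ⨅ k : ℤ, |x - k|

/-- The Takagi-class function Ψ_t(z) = Σ_{k=0}^∞ t^k σ(2^k z). -/
noncomputable def takagi (t z : ℝ) : ℝ := ∑' k : ℕ, t ^ k * distNearInt (2 ^ k * z)

/-- Vertical displacement per unit load of the end node located at `z` in a binary tree
structure with `P` levels, from the Principle of Virtual Work (bending + axial + shear). -/
noncomputable def Vdisp (c s L E I A A' G a u v z : ℝ) (P : ℕ) : ℝ :=
  (∑ i ∈ Finset.Icc 1 P, (a ^ (i - 1) / (E * I)) *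
      ∫ x in (0:ℝ)..(L * 2 ^ ((1:ℤ) - (i:ℤ))),
        (4 * c * L * (2 ^ (-(i:ℤ)) - distNearInt (2 ^ (i - 1) * z) / 2 ^ (i - 1)) - c * x) *
          (c * 2 ^ (-(i:ℤ)) * (L * 2 ^ ((1:ℤ) - (i:ℤ)) - x))) +
  (∑ i ∈ Finset.Icc 1 P,
      s ^ 2 * 2 ^ (-(i:ℤ)) * L * 2 ^ ((1:ℤ) - (i:ℤ)) * u ^ (i - 1) / (E * A)) +
  (∑ i ∈ Finset.Icc 1 P,
      c ^ 2 * 2 ^ (-(i:ℤ)) * L * 2 ^ ((1:ℤ) - (i:ℤ)) * v ^ (i - 1) / (G * A'))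

lemma distNearInt_nonneg (x : ℝ) : 0 ≤ distNearInt x :=
  Real.iInf_nonneg fun _ => abs_nonneg _

lemma distNearInt_le_half (x : ℝ) : distNearInt x ≤ 1 / 2 := by
  have hb : BddBelow (Set.range fun k : ℤ => |x - k|) :=
    ⟨0, by rintro y ⟨k, rfl⟩; exact abs_nonneg _⟩
  calc distNearInt x ≤ |x - round x| := ciInf_le hb (round x)
    _ ≤ 1 / 2 := by simpa using abs_sub_round x

lemma summable_takagi (t z : ℝ) (ht0 : 0 ≤ t) (ht1 : t < 1) :
    Summable (fun k : ℕ => t ^ k * distNearInt (2 ^ k * z)) := by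
  refine Summable.of_nonneg_of_le
    (fun k => mul_nonneg (pow_nonneg ht0 k) (distNearInt_nonneg _))
    (fun k => ?_) (summable_geometric_of_lt_one ht0 ht1)
  calc t ^ k * distNearInt (2 ^ k * z) ≤ t ^ k * 1 := by
        refine mul_le_mul_of_nonneg_left ?_ (pow_nonneg ht0 k)
        linarith [distNearInt_le_half (2 ^ k * z)]
    _ = t ^ k := mul_one _

lemma integral_poly (Q k c2 b : ℝ) :
    (∫ x in (0:ℝ)..b, (Q - k * x) * (c2 * (b - x)))
      = c2 * (Q * b ^ 2 / 2 - k * b ^ 3 / 6) := by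
  have h : ∀ x : ℝ, (Q - k * x) * (c2 * (b - x))
      = c2 * Q * b + ((-(c2 * Q) - c2 * k * b) * x + c2 * k * x ^ 2) := by
    intro x; ring
  rw [intervalIntegral.integral_congr (g := fun x => c2 * Q * b +
      ((-(c2 * Q) - c2 * k * b) * x + c2 * k * x ^ 2)) (fun x _ => h x)]
  rw [intervalIntegral.integral_add (intervalIntegrable_const)
      ((by fun_prop : Continuous fun x : ℝ =>
        (-(c2 * Q) - c2 * k * b) * x + c2 * k * x ^ 2).intervalIntegrable _ _),
    intervalIntegral.integral_add
      ((by fun_prop : Continuous fun x : ℝ => (-(c2 * Q) - c2 * k * b) * x).intervalIntegrable _ _)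
      ((by fun_prop : Continuous fun x : ℝ => c2 * k * x ^ 2).intervalIntegrable _ _),
    intervalIntegral.integral_const, intervalIntegral.integral_const_mul,
    intervalIntegral.integral_const_mul, integral_id,
    integral_pow, smul_eq_mul]
  ring

lemma pow16 (k : ℕ) : (16:ℝ) ^ k = ((2:ℝ) ^ k) ^ 4 := by
  rw [show (16:ℝ) = 2 ^ 4 by norm_num, ← pow_mul, ← pow_mul, Nat.mul_comm]

lemma pow4 (k : ℕ) : (4:ℝ) ^ k = ((2:ℝ) ^ k) ^ 2 := by
  rw [show (4:ℝ) = 2 ^ 2 by norm_num, ← pow_mul, ← pow_mul, Nat.mul_comm]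

lemma zpow_e1 (k : ℕ) : (2:ℝ) ^ (-((1+k:ℕ):ℤ)) = ((2:ℝ) ^ (k+1))⁻¹ := by
  rw [zpow_neg]; congr 1; rw [← zpow_natCast]; congr 1; push_cast; ring

lemma zpow_e2 (k : ℕ) : (2:ℝ) ^ ((1:ℤ) - ((1+k:ℕ):ℤ)) = ((2:ℝ) ^ k)⁻¹ := by
  have h : (1:ℤ) - ((1+k:ℕ):ℤ) = -(k:ℤ) := by push_cast; ring
  rw [h, zpow_neg, zpow_natCast]

lemma term_bend (c L E I a z : ℝ) (hE : E ≠ 0) (hI : I ≠ 0) (k : ℕ) :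
    (a ^ ((1+k) - 1) / (E * I)) *
      ∫ x in (0:ℝ)..(L * 2 ^ ((1:ℤ) - ((1+k : ℕ):ℤ))),
        (4 * c * L * (2 ^ (-((1+k:ℕ):ℤ)) - distNearInt (2 ^ ((1+k) - 1) * z) / 2 ^ ((1+k) - 1)) - c * x) *
          (c * 2 ^ (-((1+k:ℕ):ℤ)) * (L * 2 ^ ((1:ℤ) - ((1+k:ℕ):ℤ)) - x))
    = (c^2*L^3/(E*I)) * (a/16)^k * (5/12 - distNearInt (2^k * z)) := by
  rw [integral_poly, zpow_e1, zpow_e2, Nat.add_sub_cancel_left, div_pow, pow16]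
  have hp : (2:ℝ) ^ k ≠ 0 := by positivity
  have hp2 : (2:ℝ) ^ (k+1) = 2 * 2 ^ k := by rw [pow_succ]; ring
  rw [hp2]
  field_simp
  ring

lemma term_ax (s L E A u : ℝ) (hE : E ≠ 0) (hA : A ≠ 0) (k : ℕ) :
    s ^ 2 * 2 ^ (-((1+k:ℕ):ℤ)) * L * 2 ^ ((1:ℤ) - ((1+k:ℕ):ℤ)) * u ^ ((1+k) - 1) / (E * A)
    = s^2*L/(2*(E*A)) * (u/4)^k := by
  rw [zpow_e1, zpow_e2, Nat.add_sub_cancel_left, div_pow, pow4]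
  have hp : (2:ℝ) ^ k ≠ 0 := by positivity
  have hp2 : (2:ℝ) ^ (k+1) = 2 * 2 ^ k := by rw [pow_succ]; ring
  rw [hp2]
  field_simp

/-- For `1 < a < 16`, `1 < u < 4`, `1 < v < 4`, the vertical displacements of the end nodes
converge, as the number of levels tends to infinity, to a Takagi curve. -/
theorem vertical_displacement_infinite (c s L E I A A' G a u v : ℝ)
    (hc : 0 < c) (hs : 0 < s) (hL : 0 < L) (hE : 0 < E) (hI : 0 < I)
    (hA : 0 < A) (hA' : 0 < A') (hG : 0 < G)
    (ha1 : 1 < a) (ha16 : a < 16) (hu1 : 1 < u) (hu4 : u < 4) (hv1 : 1 < v) (hv4 : v < 4)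
    (z : ℝ) :
    Tendsto (fun P : ℕ => Vdisp c s L E I A A' G a u v z P) atTop
      (nhds (20 * c ^ 2 * L ^ 3 / (3 * E * I * (16 - a)) -
        (c ^ 2 * L ^ 3 / (E * I)) * takagi (a / 16) z +
        2 * s ^ 2 * L / (E * A * (4 - u)) +
        2 * c ^ 2 * L / (G * A' * (4 - v)))) := by
  have hta0 : (0:ℝ) ≤ a / 16 := by positivity
  have hta1 : a / 16 < 1 := by linarith [div_lt_one (by norm_num : (0:ℝ) < 16) |>.mpr ha16]
  have htu0 : (0:ℝ) ≤ u / 4 := by positivity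
  have htu1 : u / 4 < 1 := by rw [div_lt_one (by norm_num : (0:ℝ) < 4)]; linarith
  have htv0 : (0:ℝ) ≤ v / 4 := by positivity
  have htv1 : v / 4 < 1 := by rw [div_lt_one (by norm_num : (0:ℝ) < 4)]; linarith
  -- rewrite Vdisp as sums over range
  have hVeq : ∀ P : ℕ, Vdisp c s L E I A A' G a u v z P =
      (∑ k ∈ Finset.range P,
        ((c^2*L^3/(E*I)) * (5/12) * (a/16)^k - (c^2*L^3/(E*I)) * ((a/16)^k * distNearInt (2^k * z)))) +
      (∑ k ∈ Finset.range P, s^2*L/(2*(E*A)) * (u/4)^k) +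
      (∑ k ∈ Finset.range P, c^2*L/(2*(G*A')) * (v/4)^k) := by
    intro P
    unfold Vdisp
    rw [← Finset.Ico_add_one_right_eq_Icc, Finset.sum_Ico_eq_sum_range, Finset.sum_Ico_eq_sum_range,
      Finset.sum_Ico_eq_sum_range]
    simp only [Nat.add_sub_cancel]
    congr 1
    · congr 1
      · refine Finset.sum_congr rfl fun k _ => ?_
        rw [term_bend c L E I a z hE.ne' hI.ne' k]
        ring
      · exact Finset.sum_congr rfl fun k _ => term_ax s L E A u hE.ne' hA.ne' k
    · exact Finset.sum_congr rfl fun k _ => term_ax c L G A' v hG.ne' hA'.ne' k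
  -- the three series
  have h1a : HasSum (fun k : ℕ => (c^2*L^3/(E*I)) * (5/12) * (a/16)^k)
      ((c^2*L^3/(E*I)) * (5/12) * (1 - a/16)⁻¹) :=
    (hasSum_geometric_of_lt_one hta0 hta1).mul_left _
  have h1b : HasSum (fun k : ℕ => (c^2*L^3/(E*I)) * ((a/16)^k * distNearInt (2^k * z)))
      ((c^2*L^3/(E*I)) * takagi (a/16) z) := by
    exact ((summable_takagi (a/16) z hta0 hta1).hasSum).mul_left _
  have h1 := h1a.sub h1b
  have h2 : HasSum (fun k : ℕ => s^2*L/(2*(E*A)) * (u/4)^k)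
      (s^2*L/(2*(E*A)) * (1 - u/4)⁻¹) :=
    (hasSum_geometric_of_lt_one htu0 htu1).mul_left _
  have h3 : HasSum (fun k : ℕ => c^2*L/(2*(G*A')) * (v/4)^k)
      (c^2*L/(2*(G*A')) * (1 - v/4)⁻¹) :=
    (hasSum_geometric_of_lt_one htv0 htv1).mul_left _
  have hT := ((h1.tendsto_sum_nat.add h2.tendsto_sum_nat).add h3.tendsto_sum_nat)
  have hfun : (fun P : ℕ => Vdisp c s L E I A A' G a u v z P) =
      fun P : ℕ =>
        (∑ k ∈ Finset.range P,
          ((c^2*L^3/(E*I)) * (5/12) * (a/16)^k - (c^2*L^3/(E*I)) * ((a/16)^k * distNearInt (2^k * z)))) +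
        (∑ k ∈ Finset.range P, s^2*L/(2*(E*A)) * (u/4)^k) +
        (∑ k ∈ Finset.range P, c^2*L/(2*(G*A')) * (v/4)^k) := funext hVeq
  rw [hfun]
  convert hT using 2
  have h16a : (16:ℝ) - a ≠ 0 := by linarith
  have h4u : (4:ℝ) - u ≠ 0 := by linarith
  have h4v : (4:ℝ) - v ≠ 0 := by linarith
  have ha16' : (1:ℝ) - a/16 ≠ 0 := by
    intro h; apply h16a; linarith [(sub_eq_zero.mp h)]
  have hu4' : (1:ℝ) - u/4 ≠ 0 := by
    intro h; apply h4u; linarith [(sub_eq_zero.mp h)]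
  have hv4' : (1:ℝ) - v/4 ≠ 0 := by
    intro h; apply h4v; linarith [(sub_eq_zero.mp h)]
  field_simp
  ring
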